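/- Let f : (0, ∞) → ℝ be given by f(x) = √x, and let g : (0, ∞) → ℝ be twice differentiable. Then 12 f''(x)² g''(x) − 12 f''(x) f'''(x) g'(x) + (5 f'''(x)² − 3 f''(x) f⁽⁴⁾(x)) g(x) = 0 for all x ∈ (0, ∞) if and only if there exist constants c₁, c₂ ∈ ℝ such that g(x) = c₁ + c₂ x^{−1/2} for all x ∈ (0, ∞). -/

import Mathlib

open Set

private lemma derivIoi {F G : ℝ → ℝ} (h : ∀ y ∈ Ioi (0:ℝ), F y = G y)
    {x : ℝ} (hx : x ∈ Ioi (0:ℝ)) : deriv F x = deriv G x :=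
  Filter.EventuallyEq.deriv_eq (Filter.eventuallyEq_of_mem (isOpen_Ioi.mem_nhds hx) h)

private lemma hasDerivAt_crpow (c p : ℝ) {x : ℝ} (hx : 0 < x) :
    HasDerivAt (fun y : ℝ => c * y ^ p) (c * p * x ^ (p - 1)) x := by
  simpa [mul_assoc] using (Real.hasDerivAt_rpow_const (p := p) (Or.inl hx.ne')).const_mul c

private lemma deriv_crpow (c p : ℝ) {x : ℝ} (hx : 0 < x) :
    deriv (fun y : ℝ => c * y ^ p) x = c * p * x ^ (p - 1) :=
  (hasDerivAt_crpow c p hx).deriv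

private lemma sqrt_d1 : ∀ x ∈ Ioi (0:ℝ), deriv Real.sqrt x = (1/2) * x ^ (-(1:ℝ)/2) := by
  intro x hx
  have h0 : ∀ y ∈ Ioi (0:ℝ), Real.sqrt y = 1 * (y : ℝ) ^ ((1:ℝ)/2) := by
    intro y _; rw [one_mul, Real.sqrt_eq_rpow]
  rw [derivIoi h0 hx, deriv_crpow 1 ((1:ℝ)/2) hx]
  norm_num

private lemma sqrt_d2 : ∀ x ∈ Ioi (0:ℝ),
    deriv^[2] Real.sqrt x = -(1/4) * x ^ (-(3:ℝ)/2) := by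
  intro x hx
  have : deriv^[2] Real.sqrt x = deriv (deriv Real.sqrt) x := by
    simp [Function.iterate_succ_apply']
  rw [this, derivIoi sqrt_d1 hx, deriv_crpow (1/2) (-(1:ℝ)/2) hx]
  norm_num

private lemma sqrt_d3 : ∀ x ∈ Ioi (0:ℝ),
    deriv^[3] Real.sqrt x = (3/8) * x ^ (-(5:ℝ)/2) := by
  intro x hx
  have : deriv^[3] Real.sqrt x = deriv (deriv^[2] Real.sqrt) x := by
    rw [Function.iterate_succ_apply']
  rw [this, derivIoi sqrt_d2 hx, deriv_crpow (-(1/4)) (-(3:ℝ)/2) hx]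
  norm_num

private lemma sqrt_d4 : ∀ x ∈ Ioi (0:ℝ),
    deriv^[4] Real.sqrt x = -(15/16) * x ^ (-(7:ℝ)/2) := by
  intro x hx
  have : deriv^[4] Real.sqrt x = deriv (deriv^[3] Real.sqrt) x := by
    rw [Function.iterate_succ_apply']
  rw [this, derivIoi sqrt_d3 hx, deriv_crpow (3/8) (-(5:ℝ)/2) hx]
  norm_num

private lemma const_of_hasDerivAt_zero {u : ℝ → ℝ}
    (h : ∀ x ∈ Ioi (0:ℝ), HasDerivAt u 0 x) {x y : ℝ}
    (hx : x ∈ Ioi (0:ℝ)) (hy : y ∈ Ioi (0:ℝ)) : u x = u y := by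
  refine (convex_Ioi (0:ℝ)).is_const_of_fderivWithin_eq_zero
    (fun z hz => ((h z hz).differentiableAt).differentiableWithinAt) ?_ hx hy
  intro z hz
  rw [fderivWithin_of_isOpen isOpen_Ioi hz, ((h z hz).hasFDerivAt).fderiv]
  ext; simp

/-- Theorem 6.1, case 3): for `f(x) = √x` on `(0,∞)`, a twice differentiable
`g` satisfies the second equation of system (sys1) iff
`g(x) = c₁ + c₂ x^{-1/2}`. -/
theorem one_var_admissible_sqrt (g : ℝ → ℝ)
    (hg : ∀ x ∈ Ioi (0 : ℝ), DifferentiableAt ℝ g x ∧ DifferentiableAt ℝ (deriv g) x) :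
    (∀ x ∈ Ioi (0 : ℝ),
        12 * (deriv^[2] Real.sqrt x) ^ 2 * deriv^[2] g x
          - 12 * deriv^[2] Real.sqrt x * deriv^[3] Real.sqrt x * deriv g x
          + (5 * (deriv^[3] Real.sqrt x) ^ 2
              - 3 * deriv^[2] Real.sqrt x * deriv^[4] Real.sqrt x) * g x = 0) ↔
    (∃ c₁ c₂ : ℝ, ∀ x ∈ Ioi (0 : ℝ),
        g x = c₁ + c₂ * x ^ (-(1 : ℝ) / 2)) := by
  have hg2 : ∀ x : ℝ, deriv^[2] g x = deriv (deriv g) x := by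
    intro x; simp [Function.iterate_succ_apply']
  -- powers of x^{-1/2}
  have epow : ∀ x : ℝ, 0 < x → ∀ n : ℕ, ∀ p : ℝ, p = -(n:ℝ)/2 →
      x ^ p = (x ^ (-(1:ℝ)/2)) ^ n := by
    intro x hx n p hp
    rw [hp, ← Real.rpow_natCast (x ^ (-(1:ℝ)/2)) n, ← Real.rpow_mul hx.le]
    ring_nf
  constructor
  · intro hODE
    -- Step 1: the ODE reduces to g'' = -(3/2) x⁻¹ g'.
    have key : ∀ x ∈ Ioi (0:ℝ),
        deriv (deriv g) x = -(3/2) * (x ^ (-(1:ℝ)/2))^2 * deriv g x := by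
      intro x hx
      have hx0 : (0:ℝ) < x := hx
      set t := x ^ (-(1:ℝ)/2) with ht_def
      have ht : 0 < t := Real.rpow_pos_of_pos hx0 _
      have e3 : x ^ (-(3:ℝ)/2) = t ^ 3 := epow x hx0 3 _ (by norm_num)
      have e5 : x ^ (-(5:ℝ)/2) = t ^ 5 := epow x hx0 5 _ (by norm_num)
      have e7 : x ^ (-(7:ℝ)/2) = t ^ 7 := epow x hx0 7 _ (by norm_num)
      have E := hODE x hx
      rw [sqrt_d2 x hx, sqrt_d3 x hx, sqrt_d4 x hx, hg2 x, e3, e5, e7] at E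
      have E' : t^6 * ((3/4) * deriv (deriv g) x + (9/8) * t^2 * deriv g x) = 0 := by
        linear_combination E
      have hinner := (mul_eq_zero.mp E').resolve_left (pow_ne_zero 6 ht.ne')
      linarith
    -- Step 2: u(x) := x^{3/2} g'(x) is constant.
    have hu : ∀ x ∈ Ioi (0:ℝ),
        HasDerivAt (fun y : ℝ => y ^ ((3:ℝ)/2) * deriv g y) 0 x := by
      intro x hx
      have hx0 : (0:ℝ) < x := hx
      have h1 : HasDerivAt (fun y : ℝ => y ^ ((3:ℝ)/2)) ((3/2) * x ^ ((3:ℝ)/2 - 1)) x :=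
        Real.hasDerivAt_rpow_const (Or.inl hx0.ne')
      have h2 : HasDerivAt (deriv g) (deriv (deriv g) x) x := (hg x hx).2.hasDerivAt
      have h3 := h1.fun_mul h2
      refine h3.congr_deriv (Eq.symm ?_)
      rw [key x hx]
      set t := x ^ (-(1:ℝ)/2) with ht_def
      have hs3 : x ^ ((3:ℝ)/2) = (x ^ ((1:ℝ)/2))^3 := by
        rw [← Real.rpow_natCast (x ^ ((1:ℝ)/2)) 3, ← Real.rpow_mul hx0.le]; norm_num
      have hs1 : x ^ ((3:ℝ)/2 - 1) = x ^ ((1:ℝ)/2) := by norm_num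
      have hst : x ^ ((1:ℝ)/2) * t = 1 := by
        rw [ht_def, ← Real.rpow_add hx0]; norm_num
      set s := x ^ ((1:ℝ)/2)
      rw [hs1, hs3]
      linear_combination ((3/2) * s * deriv g x * (s * t + 1)) * hst
    obtain ⟨K, hK⟩ : ∃ K : ℝ, ∀ x ∈ Ioi (0:ℝ), x ^ ((3:ℝ)/2) * deriv g x = K :=
      ⟨(1:ℝ) ^ ((3:ℝ)/2) * deriv g 1,
        fun x hx => const_of_hasDerivAt_zero hu hx (Set.mem_Ioi.mpr one_pos)⟩
    have hg' : ∀ x ∈ Ioi (0:ℝ), deriv g x = K * x ^ (-(3:ℝ)/2) := by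
      intro x hx
      have hx0 : (0:ℝ) < x := hx
      have hst : x ^ (-(3:ℝ)/2) * x ^ ((3:ℝ)/2) = 1 := by
        rw [← Real.rpow_add hx0]; norm_num
      have h := congrArg (fun z => x ^ (-(3:ℝ)/2) * z) (hK x hx)
      simp only [← mul_assoc, hst, one_mul] at h
      rw [h]; ring
    -- Step 3: v(x) := g(x) + 2K x^{-1/2} is constant.
    have hv : ∀ x ∈ Ioi (0:ℝ),
        HasDerivAt (fun y : ℝ => g y + 2 * K * y ^ (-(1:ℝ)/2)) 0 x := by
      intro x hx
      have hx0 : (0:ℝ) < x := hx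
      have h1 : HasDerivAt g (deriv g x) x := (hg x hx).1.hasDerivAt
      have h2 := hasDerivAt_crpow (2*K) (-(1:ℝ)/2) hx0
      have h3 := h1.fun_add h2
      refine h3.congr_deriv (Eq.symm ?_)
      rw [hg' x hx]
      have he : (-(1:ℝ)/2 - 1) = -(3:ℝ)/2 := by norm_num
      rw [he]; ring
    obtain ⟨C, hC⟩ : ∃ C : ℝ, ∀ x ∈ Ioi (0:ℝ), g x + 2 * K * x ^ (-(1:ℝ)/2) = C :=
      ⟨g 1 + 2 * K * (1:ℝ) ^ (-(1:ℝ)/2),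
        fun x hx => const_of_hasDerivAt_zero hv hx (Set.mem_Ioi.mpr one_pos)⟩
    refine ⟨C, -2 * K, fun x hx => ?_⟩
    have := hC x hx
    linarith
  · rintro ⟨c₁, c₂, hform⟩
    intro x hx
    have hx0 : (0:ℝ) < x := hx
    have hd1 : ∀ y ∈ Ioi (0:ℝ), deriv g y = (c₂ * (-(1:ℝ)/2)) * y ^ (-(3:ℝ)/2) := by
      intro y hy
      have hy0 : (0:ℝ) < y := hy
      have h2 := hasDerivAt_crpow c₂ (-(1:ℝ)/2) hy0
      rw [derivIoi hform hy, ((hasDerivAt_const y c₁).fun_add h2).deriv]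
      norm_num
    have hd2 : deriv^[2] g x = (c₂ * (-(1:ℝ)/2) * (-(3:ℝ)/2)) * x ^ (-(5:ℝ)/2) := by
      rw [hg2 x, derivIoi hd1 hx, deriv_crpow (c₂ * (-(1:ℝ)/2)) (-(3:ℝ)/2) hx0]
      norm_num
    have e1 : x ^ (-(1:ℝ)/2) = (x ^ (-(1:ℝ)/2)) ^ 1 := (pow_one _).symm
    have e3 : x ^ (-(3:ℝ)/2) = (x ^ (-(1:ℝ)/2)) ^ 3 := epow x hx0 3 _ (by norm_num)
    have e5 : x ^ (-(5:ℝ)/2) = (x ^ (-(1:ℝ)/2)) ^ 5 := epow x hx0 5 _ (by norm_num)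
    have e7 : x ^ (-(7:ℝ)/2) = (x ^ (-(1:ℝ)/2)) ^ 7 := epow x hx0 7 _ (by norm_num)
    rw [sqrt_d2 x hx, sqrt_d3 x hx, sqrt_d4 x hx, hd2, hd1 x hx, hform x hx,
      e3, e5, e7, e1]
    ring
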